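/- arXiv:2406.02758 — 2 statements merged into one kernel-verified Lean document; each statement's English description precedes it below -/
import Mathlib

section
/- Let a ≥ 0 and let f ∈ N_a satisfy Assumption A, and set α(λ) := min( 3/(1 − λK), 1/(1 + λa) ). If λ > 0 and w ∈ B satisfies α(λ) ≤ ‖w‖ < 1, then ‖w + λ f(w)‖ ≥ 1. -/
open Complex Metric

/-- The set `J(x)` of support functionals at `x`:
`{x* ∈ X* : ⟨x, x*⟩ = ‖x‖² = ‖x*‖²}`. -/
def suppFun {X : Type*} [NormedAddCommGroup X] [NormedSpace ℂ X] (x : X) :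
    Set (X →L[ℂ] ℂ) :=
  {φ | φ x = (‖x‖ : ℂ) ^ 2 ∧ ‖φ‖ = ‖x‖}

/-- The class `N_a`: holomorphic mappings `f` of the open unit ball with `f(0)=0` and
`Re⟨f(x), x*⟩ ≥ a‖x‖²` for all `x ∈ B`, `x* ∈ J(x)`. -/
def IsNa {X : Type*} [NormedAddCommGroup X] [NormedSpace ℂ X] (a : ℝ) (f : X → X) : Prop :=
  DifferentiableOn ℂ f (ball 0 1) ∧ f 0 = 0 ∧
    ∀ x ∈ ball (0 : X) 1, ∀ φ ∈ suppFun x, a * ‖x‖ ^ 2 ≤ (φ (f x)).re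

/-- `K_A(θ) = sup { Re (e^{-iθ} w) : w ∈ V(A) }`, the support function of the
numerical range `V(A) = {⟨Ax, x*⟩ : ‖x‖ = 1, x* ∈ J(x)}`. -/
noncomputable def KA {X : Type*} [NormedAddCommGroup X] [NormedSpace ℂ X]
    (A : X →L[ℂ] X) (θ : ℝ) : ℝ :=
  sSup {s : ℝ | ∃ x : X, ‖x‖ = 1 ∧ ∃ φ ∈ suppFun x,
    s = (Complex.exp (-(θ : ℂ) * Complex.I) * φ (A x)).re}


section AuxCor43

private lemma aux_sq {x β t : ℝ} (hx : 0 < x) (hβ : 0 < β) (ht : 0 ≤ t)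
    (h : (x - β)^2 ≤ t^2 * (x + β)^2) : β * (1 - t) ≤ x * (1 + t) := by
  nlinarith [sq_nonneg (x - β + t*(x+β)), mul_nonneg ht (by linarith : (0:ℝ) ≤ x + β)]


private lemma harnack_strict (a : ℝ) (p : ℂ → ℂ) (hp : DifferentiableOn ℂ p (ball 0 1))
    (hre : ∀ z ∈ ball (0:ℂ) 1, a < (p z).re) (z : ℂ) (hz : z ∈ ball (0:ℂ) 1) :
    a + ((p 0).re - a) * ((1 - ‖z‖)/(1 + ‖z‖)) ≤ (p z).re := by
  have h0 : (0:ℂ) ∈ ball (0:ℂ) 1 := by simp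
  set q : ℂ → ℂ := fun w => (p w - p 0) / (p w + (starRingEnd ℂ) (p 0) - 2*a) with hq_def
  -- denominator facts
  have hden_re : ∀ w ∈ ball (0:ℂ) 1,
      (p w + (starRingEnd ℂ) (p 0) - 2*a).re = ((p w).re - a) + ((p 0).re - a) := by
    intro w hw; simp [Complex.add_re, Complex.sub_re, Complex.conj_re]; ring
  have hden_ne : ∀ w ∈ ball (0:ℂ) 1, p w + (starRingEnd ℂ) (p 0) - 2*a ≠ 0 := by
    intro w hw hc
    have := hden_re w hw
    rw [hc] at this
    have h1 := hre w hw; have h2 := hre 0 h0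
    simp at this; linarith
  -- normSq computations
  have hnum_sq : ∀ w, Complex.normSq (p w - p 0)
      = (((p w).re - a) - ((p 0).re - a))^2 + ((p w).im - (p 0).im)^2 := by
    intro w; simp [Complex.normSq_apply, Complex.sub_re, Complex.sub_im]; ring
  have hden_sq : ∀ w, Complex.normSq (p w + (starRingEnd ℂ) (p 0) - 2*a)
      = (((p w).re - a) + ((p 0).re - a))^2 + ((p w).im - (p 0).im)^2 := by
    intro w
    simp [Complex.normSq_apply, Complex.sub_re, Complex.sub_im, Complex.add_re, Complex.add_im,
      Complex.conj_re, Complex.conj_im]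
    ring
  -- q maps ball to ball
  have hmaps : Set.MapsTo q (ball (0:ℂ) 1) (ball (0:ℂ) 1) := by
    intro w hw
    rw [mem_ball_zero_iff]
    have hx := hre w hw; have hβ := hre 0 h0
    have hlt : Complex.normSq (p w - p 0)
        < Complex.normSq (p w + (starRingEnd ℂ) (p 0) - 2*a) := by
      rw [hnum_sq, hden_sq]; nlinarith [hre w hw, hre 0 h0]
    have hd0 : (0:ℝ) < ‖p w + (starRingEnd ℂ) (p 0) - 2*a‖ :=
      norm_pos_iff.mpr (hden_ne w hw)
    have : ‖p w - p 0‖ < ‖p w + (starRingEnd ℂ) (p 0) - 2*a‖ := by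
      have := hlt
      rw [← Complex.sq_norm, ← Complex.sq_norm] at this
      nlinarith [norm_nonneg (p w - p 0), hd0]
    rw [hq_def]
    simp only [norm_div]
    rw [div_lt_one hd0]
    exact this
  have hq0 : q 0 = 0 := by simp [hq_def]
  have hqd : DifferentiableOn ℂ q (ball 0 1) :=
    DifferentiableOn.div (hp.sub (differentiableOn_const _))
      ((hp.add (differentiableOn_const _)).sub (differentiableOn_const _)) hden_ne
  have hSchwarz : ‖q z‖ ≤ ‖z‖ :=
    Complex.norm_le_norm_of_mapsTo_ball_self hqd (hmaps.mono_right ball_subset_closedBall) hq0 (mem_ball_zero_iff.1 hz)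
  -- translate to real inequality
  set t := ‖z‖ with ht_def
  have ht0 : 0 ≤ t := norm_nonneg z
  have ht1 : t < 1 := mem_ball_zero_iff.1 hz
  set x := (p z).re - a with hx_def
  set β := (p 0).re - a with hβ_def
  have hx : 0 < x := by have := hre z hz; simp [hx_def]; linarith
  have hβpos : 0 < β := by have := hre 0 h0; simp [hβ_def]; linarith
  have hd0 : (0:ℝ) < ‖p z + (starRingEnd ℂ) (p 0) - 2*a‖ :=
    norm_pos_iff.mpr (hden_ne z hz)
  have hnum_le : ‖p z - p 0‖ ≤ t * ‖p z + (starRingEnd ℂ) (p 0) - 2*a‖ := by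
    have : ‖p z - p 0‖ / ‖p z + (starRingEnd ℂ) (p 0) - 2*a‖ ≤ t := by
      have := hSchwarz
      rwa [hq_def, norm_div] at this
    calc ‖p z - p 0‖
        = (‖p z - p 0‖ / ‖p z + (starRingEnd ℂ) (p 0) - 2*a‖)
            * ‖p z + (starRingEnd ℂ) (p 0) - 2*a‖ := by field_simp
      _ ≤ t * ‖p z + (starRingEnd ℂ) (p 0) - 2*a‖ :=
          mul_le_mul_of_nonneg_right this hd0.le
  have hsq : (x - β)^2 ≤ t^2 * (x + β)^2 := by
    have h2 : Complex.normSq (p z - p 0)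
        ≤ t^2 * Complex.normSq (p z + (starRingEnd ℂ) (p 0) - 2*a) := by
      rw [← Complex.sq_norm, ← Complex.sq_norm]
      nlinarith [norm_nonneg (p z - p 0), hnum_le, hd0,
        mul_nonneg ht0 hd0.le]
    rw [hnum_sq, hden_sq] at h2
    have him : (0:ℝ) ≤ ((p z).im - (p 0).im)^2 := sq_nonneg _
    have ht2 : (0:ℝ) ≤ (1 - t^2) * (((p z).im - (p 0).im)^2) :=
      mul_nonneg (by nlinarith) him
    rw [show x = (p z).re - a from hx_def]
    nlinarith [h2, ht2]
  have hkey : β * (1 - t) ≤ x * (1 + t) := aux_sq hx hβpos ht0 hsq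
  have h1t : (0:ℝ) < 1 + t := by linarith
  have hfrac : β * ((1-t)/(1+t)) ≤ x := by
    have hdd : (β*(1-t))/(1+t) ≤ x := (div_le_iff₀ h1t).mpr (by linarith)
    calc β * ((1-t)/(1+t)) = (β*(1-t))/(1+t) := by ring
      _ ≤ x := hdd
  have hxid : x = (p z).re - a := hx_def
  have hβid : β = (p 0).re - a := hβ_def
  linarith

private lemma harnack (a : ℝ) (p : ℂ → ℂ) (hp : DifferentiableOn ℂ p (ball 0 1))
    (hre : ∀ z ∈ ball (0:ℂ) 1, a ≤ (p z).re) (z : ℂ) (hz : z ∈ ball (0:ℂ) 1) :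
    a + ((p 0).re - a) * ((1 - ‖z‖)/(1 + ‖z‖)) ≤ (p z).re := by
  set t := ‖z‖ with ht_def
  have ht0 : 0 ≤ t := norm_nonneg z
  have ht1 : t < 1 := mem_ball_zero_iff.1 hz
  have h1t : (0:ℝ) < 1 + t := by linarith
  have hs0 : 0 ≤ (1-t)/(1+t) := div_nonneg (by linarith) h1t.le
  have hs1 : (1-t)/(1+t) ≤ 1 := by rw [div_le_one h1t]; linarith
  refine le_of_forall_pos_le_add fun ε hε => ?_
  have key := harnack_strict (a - ε) p hp (fun w hw => by linarith [hre w hw]) z hz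
  rw [← ht_def] at key
  nlinarith [mul_nonneg hε.le hs0, mul_nonneg hε.le (sub_nonneg.2 hs1)]

private lemma final_arith (a K lam r : ℝ) (ha : 0 ≤ a) (hK : K < 0) (hKa : K + a ≤ 0) (hlam : 0 < lam)
    (hr0 : 0 < r) (hr1 : r < 1)
    (hmin : 3/(1 - lam*K) ≤ r ∨ 1/(1+lam*a) ≤ r) :
    1 ≤ r + lam*r*(a + (-K - a)*((1-r)/(1+r))) := by
  have h1r : (0:ℝ) < 1 + r := by linarith
  have hexp : (1+r) * (r + lam*r*(a + (-K-a)*((1-r)/(1+r))))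
      = (1+r)*(r + lam*r*a) + lam*r*(-K-a)*(1-r) := by
    field_simp; ring
  have hb : 0 ≤ lam * a := mul_nonneg hlam.le ha
  have hc : 0 < lam * (-K) := mul_pos hlam (by linarith)
  rcases hmin with h3 | h3
  · have hu : 3 ≤ r * (1 + lam*(-K)) := by
      rw [div_le_iff₀ (by linarith : (0:ℝ) < 1 - lam*K)] at h3
      nlinarith [h3]
    rw [← mul_le_mul_iff_right₀ h1r, hexp]
    nlinarith [mul_nonneg (by linarith : (0:ℝ) ≤ r*(1+lam*(-K)) - 3) (by linarith : (0:ℝ) ≤ 1 - r),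
      sq_nonneg (1 - r), mul_nonneg hb (sq_nonneg r)]
  · have h1b : (0:ℝ) < 1 + lam*a := by linarith
    rw [div_le_iff₀ h1b] at h3
    have hs : 0 ≤ (1-r)/(1+r) := div_nonneg (by linarith) h1r.le
    nlinarith [mul_nonneg (mul_nonneg hlam.le hr0.le) (mul_nonneg (by linarith : (0:ℝ) ≤ -K-a) hs)]

end AuxCor43

set_option maxHeartbeats 1000000 in
/-- Corollary 4.3: if `α(λ) ≤ ‖w‖ < 1` then `‖w + λ f(w)‖ ≥ 1`. -/
theorem stmt_9 {X : Type*} [NormedAddCommGroup X] [NormedSpace ℂ X] [Nontrivial X]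
    (a : ℝ) (ha : 0 ≤ a) (f : X → X) (hf : IsNa a f)
    (K : ℝ) (hKdef : K = KA (fderiv ℂ f 0) Real.pi) (hK : K < 0) (hKa : K + a ≤ 0)
    (lam : ℝ) (hlam : 0 < lam) (w : X)
    (hw1 : min (3 / (1 - lam * K)) (1 / (1 + lam * a)) ≤ ‖w‖) (hw2 : ‖w‖ < 1) :
    1 ≤ ‖w + (lam : ℂ) • f w‖ := by
  obtain ⟨hf_diff, hf0, hf_ineq⟩ := hf
  set A := fderiv ℂ f 0 with hA
  have hK1 : (0:ℝ) < 1 - lam * K := by nlinarith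
  have hK2 : (0:ℝ) < 1 + lam * a := by nlinarith
  have hw0 : 0 < ‖w‖ :=
    lt_of_lt_of_le (lt_min (by positivity) (by positivity)) hw1
  have hwne : w ≠ 0 := norm_pos_iff.mp hw0
  set r : ℝ := ‖w‖ with hr
  -- the unit vector u and its support functional
  set u : X := ((r:ℂ))⁻¹ • w with hu
  have hrC : (r:ℂ) ≠ 0 := by exact_mod_cast hw0.ne'
  have hu1 : ‖u‖ = 1 := by
    rw [hu, norm_smul, norm_inv, Complex.norm_real, Real.norm_of_nonneg hw0.le]
    field_simp
    exact hr.symm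
  have hune : u ≠ 0 := by
    intro hc; rw [hc, norm_zero] at hu1; norm_num at hu1
  obtain ⟨φ, hφ1, hφu⟩ := exists_dual_vector ℂ u (norm_ne_zero_iff.mpr hune)
  rw [hu1] at hφu
  have hφu' : φ u = 1 := by exact_mod_cast hφu
  -- the one-variable function h and its dslope p
  set h : ℂ → ℂ := fun z => φ (f (z • u)) with hh_def
  have hmem : ∀ z : ℂ, z ∈ ball (0:ℂ) 1 → z • u ∈ ball (0:X) 1 := by
    intro z hz
    rw [mem_ball_zero_iff, norm_smul, hu1, mul_one]
    exact mem_ball_zero_iff.1 hz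
  have hsmul_diff : DifferentiableOn ℂ (fun z : ℂ => z • u) (ball 0 1) :=
    (differentiable_id.smul_const u).differentiableOn
  have hh_diff : DifferentiableOn ℂ h (ball 0 1) := by
    exact φ.differentiable.comp_differentiableOn (hf_diff.comp hsmul_diff hmem)
  have hh0 : h 0 = 0 := by simp [hh_def, hf0]
  set p : ℂ → ℂ := dslope h 0 with hp_def
  have hp_diff : DifferentiableOn ℂ p (ball 0 1) :=
    (Complex.differentiableOn_dslope (ball_mem_nhds 0 one_pos)).mpr hh_diff
  have hhzp : ∀ z : ℂ, z ≠ 0 → h z = z * p z := by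
    intro z hz
    rw [hp_def, dslope_of_ne h hz, slope_def_field, hh0]
    field_simp
    ring
  -- Re p ≥ a on the ball
  have hre_ne : ∀ z ∈ ball (0:ℂ) 1, z ≠ 0 → a ≤ (p z).re := by
    intro z hz hz0
    set ψ : X →L[ℂ] ℂ := (starRingEnd ℂ z) • φ with hψ
    have hψapp : ψ (z • u) = (starRingEnd ℂ z) * z := by
      rw [hψ]
      simp [map_smul, smul_eq_mul, hφu']
      ring
    have hznorm : ‖z • u‖ = ‖z‖ := by
      rw [norm_smul, hu1, mul_one]
    have hψmem : ψ ∈ suppFun (z • u) := by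
      constructor
      · rw [hψapp, hznorm]
        rw [mul_comm, Complex.mul_conj]
        rw [← Complex.ofReal_pow, Complex.sq_norm]
      · rw [hznorm]
        rw [hψ, norm_smul ((starRingEnd ℂ) z) φ, hφ1, mul_one, RCLike.norm_conj]
    have hineq := hf_ineq (z • u) (hmem z hz) ψ hψmem
    have hψf : ψ (f (z • u)) = (starRingEnd ℂ z) * h z := by
      rw [hψ, hh_def]; simp [smul_eq_mul]
    rw [hψf, hhzp z hz0] at hineq
    have : ((starRingEnd ℂ z) * (z * p z)).re = Complex.normSq z * (p z).re := by
      rw [← mul_assoc, mul_comm ((starRingEnd ℂ) z) z, Complex.mul_conj]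
      simp [Complex.mul_re]
    rw [this, hznorm] at hineq
    have hnsq : Complex.normSq z = (‖z‖)^2 := (Complex.sq_norm z).symm
    have hz0' : 0 < Complex.normSq z := Complex.normSq_pos.2 hz0
    rw [hnsq] at hineq hz0'
    nlinarith [hineq, hz0']
  have hre : ∀ z ∈ ball (0:ℂ) 1, a ≤ (p z).re := by
    intro z hz
    rcases eq_or_ne z 0 with rfl | hz0
    · -- continuity at 0
      have hcont : ContinuousAt p 0 :=
        (hp_diff.differentiableAt (ball_mem_nhds 0 one_pos)).continuousAt
      have htend : Filter.Tendsto (fun z => (p z).re) (nhdsWithin 0 {(0:ℂ)}ᶜ)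
          (nhds ((p 0).re)) :=
        ((Complex.continuous_re.continuousAt.comp hcont).tendsto).mono_left
          nhdsWithin_le_nhds
      refine ge_of_tendsto htend ?_
      have hball : ball (0:ℂ) 1 ∈ nhdsWithin (0:ℂ) {(0:ℂ)}ᶜ :=
        mem_nhdsWithin_of_mem_nhds (ball_mem_nhds _ one_pos)
      filter_upwards [hball, self_mem_nhdsWithin] with y hy hy0
      exact hre_ne y hy hy0
    · exact hre_ne z hz hz0
  -- p 0 = φ (A u)
  have hp0 : p 0 = φ (A u) := by
    rw [hp_def, dslope_same]
    have hL : HasDerivAt (fun z : ℂ => z • u) u 0 := by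
      simpa using (hasDerivAt_id (0:ℂ)).smul_const u
    have hfA : HasFDerivAt f A 0 := by
      rw [hA]
      exact (hf_diff.differentiableAt (ball_mem_nhds 0 one_pos)).hasFDerivAt
    have hfA0 : HasFDerivAt f A ((fun z : ℂ => z • u) 0) := by simpa using hfA
    have hfA' : HasDerivAt (fun z : ℂ => f (z • u)) (A u) 0 := by
      have := hfA0.comp_hasDerivAt 0 hL
      exact this
    have hhd : HasDerivAt h (φ (A u)) 0 := by
      have := (φ.hasFDerivAt (x := (fun z : ℂ => f (z • u)) 0)).comp_hasDerivAt 0 hfA'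
      exact this
    exact hhd.deriv
  -- Re p 0 ≥ -K
  have hp0K : -K ≤ (p 0).re := by
    rw [hp0]
    have hexp : Complex.exp (-(Real.pi:ℂ) * Complex.I) = -1 := by
      rw [neg_mul, Complex.exp_neg, Complex.exp_pi_mul_I]
      norm_num
    have hφsupp : φ ∈ suppFun u := by
      constructor
      · rw [hφu', hu1]; norm_num
      · rw [hφ1, hu1]
    have hmemS : -((φ (A u)).re) ∈ {s : ℝ | ∃ x : X, ‖x‖ = 1 ∧ ∃ φ' ∈ suppFun x,
        s = (Complex.exp (-(Real.pi : ℂ) * Complex.I) * φ' (A x)).re} := by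
      exact ⟨u, hu1, φ, hφsupp, by rw [hexp]; simp⟩
    have hbdd : BddAbove {s : ℝ | ∃ x : X, ‖x‖ = 1 ∧ ∃ φ' ∈ suppFun x,
        s = (Complex.exp (-(Real.pi : ℂ) * Complex.I) * φ' (A x)).re} := by
      refine ⟨‖A‖, ?_⟩
      rintro s ⟨x, hx, φ', hφ', rfl⟩
      rw [hexp]
      calc ((-1 : ℂ) * φ' (A x)).re ≤ ‖(-1 : ℂ) * φ' (A x)‖ := Complex.re_le_norm _
        _ = ‖φ' (A x)‖ := by rw [norm_mul]; simp
        _ = ‖φ' (A x)‖ := rfl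
        _ ≤ ‖φ'‖ * ‖A x‖ := φ'.le_opNorm _
        _ ≤ ‖φ'‖ * (‖A‖ * ‖x‖) := by
            exact mul_le_mul_of_nonneg_left (A.le_opNorm x) (norm_nonneg _)
        _ = ‖A‖ := by rw [hφ'.2, hx]; ring
    have hle : -((φ (A u)).re) ≤ KA A Real.pi := by
      unfold KA; exact le_csSup hbdd hmemS
    rw [hKdef]
    linarith
  -- main estimate
  have hzr : ((r:ℂ)) ∈ ball (0:ℂ) 1 := by
    rw [mem_ball_zero_iff, Complex.norm_real, Real.norm_of_nonneg hw0.le]; exact hw2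
  have habs_r : ‖(r:ℂ)‖ = r := by
    rw [Complex.norm_real, Real.norm_of_nonneg hw0.le]
  have hw_eq : ((r:ℂ)) • u = w := by
    rw [hu, smul_smul, mul_inv_cancel₀ hrC, one_smul]
  have harn := harnack a p hp_diff hre ((r:ℂ)) hzr
  rw [habs_r] at harn
  have hφw : φ w = (r:ℂ) := by rw [← hw_eq, map_smul, hφu', smul_eq_mul, mul_one]
  have hφfw : φ (f w) = (r:ℂ) * p ((r:ℂ)) := by
    have hhr : h ((r:ℂ)) = φ (f w) := by rw [hh_def]; simp only; rw [hw_eq]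
    rw [← hhr, hhzp _ hrC]
  have hre_val : (φ (w + (lam:ℂ) • f w)).re = r + lam * (r * (p ((r:ℂ))).re) := by
    rw [map_add, map_smul, hφw, hφfw, smul_eq_mul]
    rw [show (lam:ℂ) * ((r:ℂ) * p ((r:ℂ))) = ((lam * r : ℝ):ℂ) * p ((r:ℂ)) by
      push_cast; ring]
    rw [Complex.add_re, Complex.ofReal_re, Complex.re_ofReal_mul]
    ring
  have hbound : (φ (w + (lam:ℂ) • f w)).re ≤ ‖w + (lam:ℂ) • f w‖ := by
    calc (φ (w + (lam:ℂ) • f w)).re ≤ ‖φ (w + (lam:ℂ) • f w)‖ :=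
          Complex.re_le_norm _
      _ = ‖φ (w + (lam:ℂ) • f w)‖ := rfl
      _ ≤ ‖φ‖ * ‖w + (lam:ℂ) • f w‖ := φ.le_opNorm _
      _ = ‖w + (lam:ℂ) • f w‖ := by rw [hφ1, one_mul]
  have hfin := final_arith a K lam r ha hK hKa hlam hw0 hw2 (min_le_iff.mp hw1)
  have hs0 : 0 ≤ (1-r)/(1+r) := div_nonneg (by linarith) (by linarith)
  have hchain : a + (-K-a)*((1-r)/(1+r)) ≤ (p ((r:ℂ))).re := by
    nlinarith [mul_le_mul_of_nonneg_right (by linarith [hp0K] : -K - a ≤ (p 0).re - a) hs0]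
  have hlr : 0 ≤ lam * r := (mul_pos hlam hw0).le
  calc (1:ℝ) ≤ r + lam*r*(a + (-K-a)*((1-r)/(1+r))) := hfin
    _ ≤ r + lam * (r * (p ((r:ℂ))).re) := by
        nlinarith [mul_le_mul_of_nonneg_left hchain hlr]
    _ = (φ (w + (lam:ℂ) • f w)).re := hre_val.symm
    _ ≤ ‖w + (lam:ℂ) • f w‖ := hbound
end

section
/- Let a ≥ 0, let f ∈ N_a satisfy Assumption A, let λ > 0, and let G_λ be the resolvent of f. Set a_λ := max( a/(1 + λa), (−2 − λK)/(λ(1 − λK)) ). Then f ∘ G_λ ∈ N_{a_λ}; that is, (f ∘ G_λ)(0) = 0 and Re⟨f(G_λ(x)), x*⟩ ≥ a_λ‖x‖² for every x ∈ B and every x* ∈ J(x). -/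
open Complex Metric

/-- `G` is the (non-linear) resolvent of `f` with parameter `lam`: a holomorphic
self-mapping of the unit ball such that `w = G x` is the unique solution in the ball
of `w + lam f(w) = x`. -/
def IsResolvent {X : Type*} [NormedAddCommGroup X] [NormedSpace ℂ X]
    (f : X → X) (lam : ℝ) (G : X → X) : Prop :=
  DifferentiableOn ℂ G (ball 0 1) ∧
    ∀ x ∈ ball (0 : X) 1, G x ∈ ball (0 : X) 1 ∧ G x + (lam : ℂ) • f (G x) = x ∧
      ∀ w ∈ ball (0 : X) 1, w + (lam : ℂ) • f w = x → w = G x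



lemma normsq_helper (w : ℂ) : ‖w‖^2 = w.re^2 + w.im^2 := by
  rw [← Complex.normSq_eq_norm_sq, Complex.normSq_apply]; ring

lemma harnack_aux {q : ℂ → ℂ} (hq : DifferentiableOn ℂ q (ball 0 1))
    (hre : ∀ z ∈ ball (0:ℂ) 1, 0 ≤ (q z).re) {z : ℂ} (hz : z ∈ ball (0:ℂ) 1) :
    (q 0).re * ((1 - ‖z‖) / (1 + ‖z‖)) ≤ (q z).re := by
  set ρ := ‖z‖ with hρ
  have hρ1 : ρ < 1 := by simpa [hρ] using mem_ball_zero_iff.1 hz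
  have hρ0 : 0 ≤ ρ := norm_nonneg z
  have h1ρ : (0:ℝ) < 1 + ρ := by linarith
  have hc0 : 0 ≤ (1 - ρ) / (1 + ρ) := div_nonneg (by linarith) (by linarith)
  refine le_of_forall_pos_le_add (fun ε hε => ?_)
  set Q : ℂ → ℂ := fun w => q w + (ε:ℂ) with hQ
  have hQre : ∀ w ∈ ball (0:ℂ) 1, 0 < (Q w).re := by
    intro w hw
    have := hre w hw
    simp only [hQ, Complex.add_re, Complex.ofReal_re]
    linarith
  have h0b : (0:ℂ) ∈ ball (0:ℂ) 1 := mem_ball_self one_pos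
  set C : ℂ := Q 0 with hC
  have hCre : 0 < C.re := hQre 0 h0b
  have hden : ∀ w ∈ ball (0:ℂ) 1, Q w + (starRingEnd ℂ) C ≠ 0 := by
    intro w hw h
    have h1 : (Q w + (starRingEnd ℂ) C).re = 0 := by rw [h]; simp
    have h2 : (Q w + (starRingEnd ℂ) C).re = (Q w).re + C.re := by
      simp [Complex.add_re, Complex.conj_re]
    have := hQre w hw
    rw [h2] at h1; linarith
  set g : ℂ → ℂ := fun w => (Q w - C) / (Q w + (starRingEnd ℂ) C) with hg
  have hQd : DifferentiableOn ℂ Q (ball 0 1) := hq.add_const _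
  have hgd : DifferentiableOn ℂ g (ball 0 1) :=
    (hQd.sub_const C).div (hQd.add_const _) hden
  have hg0 : g 0 = 0 := by simp [hg, hC]
  have hnum2 : ∀ w : ℂ, ‖Q w - C‖^2 = ((Q w).re - C.re)^2 + ((Q w).im - C.im)^2 := by
    intro w
    rw [normsq_helper]
    simp [Complex.sub_re, Complex.sub_im]
  have hden2 : ∀ w : ℂ, ‖Q w + (starRingEnd ℂ) C‖^2
      = ((Q w).re + C.re)^2 + ((Q w).im - C.im)^2 := by
    intro w
    rw [normsq_helper]
    simp only [Complex.add_re, Complex.add_im, Complex.conj_re, Complex.conj_im]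
    ring
  have hmaps : Set.MapsTo g (ball (0:ℂ) 1) (ball (0:ℂ) 1) := by
    intro w hw
    rw [mem_ball_zero_iff, hg]
    have hd0 : (0:ℝ) < ‖Q w + (starRingEnd ℂ) C‖ := norm_pos_iff.2 (hden w hw)
    rw [norm_div, div_lt_one hd0]
    have hp : 0 < 4 * (Q w).re * C.re := by
      have := hQre w hw; positivity
    have h1 := hnum2 w
    have h2 := hden2 w
    nlinarith [norm_nonneg (Q w - C), norm_nonneg (Q w + (starRingEnd ℂ) C)]
  have hschwarz : ‖g z‖ ≤ ‖z‖ :=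
    Complex.norm_le_norm_of_mapsTo_ball hgd (hmaps.mono_right ball_subset_closedBall) hg0
      (by simpa using mem_ball_zero_iff.1 hz)
  have hgz : ‖g z‖ ≤ ρ := by simpa [hρ] using hschwarz
  have hdz : (0:ℝ) < ‖Q z + (starRingEnd ℂ) C‖ := norm_pos_iff.2 (hden z hz)
  have hnum : ‖Q z - C‖ ≤ ρ * ‖Q z + (starRingEnd ℂ) C‖ := by
    rw [hg, norm_div] at hgz
    exact (div_le_iff₀ hdz).1 hgz
  have hsq : ‖Q z - C‖^2 ≤ ρ^2 * ‖Q z + (starRingEnd ℂ) C‖^2 := by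
    nlinarith [norm_nonneg (Q z - C), norm_nonneg (Q z + (starRingEnd ℂ) C)]
  set x := (Q z).re with hx
  set α := C.re with hα
  set d := (Q z).im - C.im with hd
  have hxpos : 0 < x := hQre z hz
  have hsq' : (x - α)^2 + d^2 ≤ ρ^2 * ((x + α)^2 + d^2) := by
    rw [← hnum2, ← hden2]; exact hsq
  have hmain : α * (1 - ρ) ≤ x * (1 + ρ) := by
    nlinarith [hsq', mul_nonneg (mul_nonneg (sub_nonneg.2 hρ1.le) h1ρ.le) (sq_nonneg d),
      mul_nonneg hρ0 (add_pos hxpos hCre).le]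
  have hxe : x = (q z).re + ε := by simp [hx, hQ]
  have hαe : α = (q 0).re + ε := by simp [hα, hC, hQ]
  have hq00 : 0 ≤ (q 0).re := hre 0 h0b
  have hstep : α * ((1 - ρ) / (1 + ρ)) ≤ x := by
    rw [← mul_div_assoc, div_le_iff₀ h1ρ]; exact hmain
  calc (q 0).re * ((1 - ρ) / (1 + ρ)) ≤ α * ((1 - ρ) / (1 + ρ)) := by
        rw [hαe]; nlinarith [hc0]
    _ ≤ x := hstep
    _ = (q z).re + ε := hxe

lemma Na_lower {X : Type*} [NormedAddCommGroup X] [NormedSpace ℂ X]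
    (a : ℝ) (ha : 0 ≤ a) (f : X → X) (hf : IsNa a f)
    (K : ℝ) (hKdef : K = KA (fderiv ℂ f 0) Real.pi) (hK : K < 0)
    {y : X} (hy : y ∈ ball (0:X) 1) {ψ : X →L[ℂ] ℂ} (hψ : ψ ∈ suppFun y) :
    (-K) * ((1 - ‖y‖) / (1 + ‖y‖)) * ‖y‖^2 ≤ (ψ (f y)).re := by
  obtain ⟨hfd, hf0, hfN⟩ := hf
  by_cases hy0 : y = 0
  · simp [hy0, hf0]
  have hr0 : 0 < ‖y‖ := norm_pos_iff.2 hy0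
  have hr1 : ‖y‖ < 1 := mem_ball_zero_iff.1 hy
  have hrc : ((‖y‖ : ℝ) : ℂ) ≠ 0 := by
    simp only [ne_eq, Complex.ofReal_eq_zero]; exact hr0.ne'
  set u : X := ((‖y‖ : ℝ) : ℂ)⁻¹ • y with hu
  set φu : X →L[ℂ] ℂ := ((‖y‖ : ℝ) : ℂ)⁻¹ • ψ with hφu
  have hnormu : ‖u‖ = 1 := by
    rw [hu, norm_smul, norm_inv, Complex.norm_real, Real.norm_eq_abs,
      _root_.abs_of_nonneg hr0.le, inv_mul_cancel₀ hr0.ne']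
  have hψy : ψ y = ((‖y‖ : ℝ) : ℂ)^2 := hψ.1
  have hψnorm : ‖ψ‖ = ‖y‖ := hψ.2
  have hφuu : φu u = 1 := by
    rw [hφu, hu]
    simp only [ContinuousLinearMap.smul_apply, map_smul, smul_eq_mul, hψy]
    field_simp
  have hφu_mem : φu ∈ suppFun u := by
    constructor
    · rw [hφuu, hnormu]; norm_num
    · have h1 : ‖φu‖ = ‖y‖⁻¹ * ‖y‖ := by
        rw [hφu, norm_smul (((‖y‖:ℝ):ℂ))⁻¹ ψ, hψnorm, norm_inv, Complex.norm_real,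
          Real.norm_eq_abs, _root_.abs_of_nonneg hr0.le]
      rw [hnormu, h1, inv_mul_cancel₀ hr0.ne']
  set F : ℂ → ℂ := fun t => φu (f (t • u)) with hF
  have hmapsu : ∀ t ∈ ball (0:ℂ) 1, t • u ∈ ball (0:X) 1 := by
    intro t ht
    rw [mem_ball_zero_iff, norm_smul, hnormu, mul_one]
    exact mem_ball_zero_iff.1 ht
  have hFd : DifferentiableOn ℂ F (ball 0 1) := by
    apply (φu.differentiable.comp_differentiableOn ?_)
    exact hfd.comp ((differentiable_id.smul_const u)).differentiableOn hmapsu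
  have hF0 : F 0 = 0 := by simp [hF, hf0]
  set q : ℂ → ℂ := dslope F 0 with hq
  have hqd : DifferentiableOn ℂ q (ball 0 1) :=
    (Complex.differentiableOn_dslope (ball_mem_nhds 0 one_pos)).2 hFd
  -- value at 0
  have hA : DifferentiableAt ℂ f 0 :=
    hfd.differentiableAt (isOpen_ball.mem_nhds (mem_ball_self one_pos))
  have hderiv : HasDerivAt (fun t : ℂ => f (t • u)) ((fderiv ℂ f 0) u) 0 := by
    have h1 : HasDerivAt (fun t : ℂ => t • u) u 0 := by
      simpa using (hasDerivAt_id (0:ℂ)).smul_const u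
    have h2 : HasFDerivAt f (fderiv ℂ f 0) ((0:ℂ) • u) := by
      rw [zero_smul]; exact hA.hasFDerivAt
    exact h2.comp_hasDerivAt 0 h1
  have hq0 : q 0 = φu ((fderiv ℂ f 0) u) := by
    rw [hq, dslope_same]
    exact ((φu.hasFDerivAt.comp_hasDerivAt 0 hderiv).congr_deriv rfl).deriv
  -- K bound on q 0
  have hexp : Complex.exp (-(Real.pi:ℂ) * Complex.I) = -1 := by
    rw [neg_mul, Complex.exp_neg, Complex.exp_pi_mul_I]; norm_num
  have hbdd : BddAbove {s : ℝ | ∃ x : X, ‖x‖ = 1 ∧ ∃ φ ∈ suppFun x,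
      s = (Complex.exp (-(Real.pi : ℂ) * Complex.I) * φ ((fderiv ℂ f 0) x)).re} := by
    refine ⟨‖fderiv ℂ f 0‖, fun s hs => ?_⟩
    obtain ⟨x, hx1, φ, hφm, hse⟩ := hs
    rw [hse, hexp]
    calc ((-1 : ℂ) * φ ((fderiv ℂ f 0) x)).re ≤ ‖(-1 : ℂ) * φ ((fderiv ℂ f 0) x)‖ :=
          Complex.re_le_norm _
      _ = ‖φ ((fderiv ℂ f 0) x)‖ := by rw [norm_mul]; simp
      _ ≤ ‖φ‖ * ‖(fderiv ℂ f 0) x‖ := φ.le_opNorm _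
      _ ≤ ‖x‖ * (‖fderiv ℂ f 0‖ * ‖x‖) := by
          rw [hφm.2]
          exact mul_le_mul_of_nonneg_left ((fderiv ℂ f 0).le_opNorm x) (norm_nonneg x)
      _ = ‖fderiv ℂ f 0‖ := by rw [hx1]; ring
  have hq0K : -K ≤ (q 0).re := by
    have hmem : -(φu ((fderiv ℂ f 0) u)).re ∈ {s : ℝ | ∃ x : X, ‖x‖ = 1 ∧ ∃ φ ∈ suppFun x,
        s = (Complex.exp (-(Real.pi : ℂ) * Complex.I) * φ ((fderiv ℂ f 0) x)).re} := by
      exact ⟨u, hnormu, φu, hφu_mem, by rw [hexp]; simp⟩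
    have hle : -(φu ((fderiv ℂ f 0) u)).re ≤ K := by
      rw [hKdef]; exact le_csSup hbdd hmem
    rw [hq0]; linarith
  -- positivity of re q on the ball
  have hqre : ∀ t ∈ ball (0:ℂ) 1, 0 ≤ (q t).re := by
    intro t ht
    by_cases ht0 : t = 0
    · rw [ht0]; linarith
    · rw [hq, dslope_of_ne F ht0, slope_def_field, hF0, sub_zero, sub_zero]
      set ψ' : X →L[ℂ] ℂ := (starRingEnd ℂ t) • φu with hψ'
      have hψ't : ψ' (t • u) = (starRingEnd ℂ) t * t := by
        rw [hψ']
        simp only [ContinuousLinearMap.smul_apply, map_smul, smul_eq_mul, hφuu, mul_one]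
        ring
      have htu_norm : ‖t • u‖ = ‖t‖ := by rw [norm_smul, hnormu, mul_one]
      have hconj : (starRingEnd ℂ) t * t = ((‖t‖ : ℝ) : ℂ)^2 := by
        rw [← Complex.ofReal_pow, ← Complex.normSq_eq_norm_sq,
          ← Complex.mul_conj]
        ring
      have hψ'mem : ψ' ∈ suppFun (t • u) := by
        constructor
        · show ψ' (t • u) = ((‖t • u‖ : ℝ) : ℂ)^2
          rw [hψ't, htu_norm, hconj]
        · show ‖ψ'‖ = ‖t • u‖
          rw [htu_norm, hψ', norm_smul ((starRingEnd ℂ) t) φu, hφu_mem.2, hnormu, mul_one]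
          exact RCLike.norm_conj t
      have hna := hfN (t • u) (hmapsu t ht) ψ' hψ'mem
      have hre' : (ψ' (f (t • u))).re = ((starRingEnd ℂ t) * F t).re := by
        rw [hψ']; simp [hF]
      have hns : 0 < Complex.normSq t := Complex.normSq_pos.2 ht0
      have hdivre : (F t / t).re = (Complex.normSq t)⁻¹ * ((starRingEnd ℂ t) * F t).re := by
        rw [div_eq_mul_inv, Complex.inv_def]
        rw [show F t * ((starRingEnd ℂ) t * (((Complex.normSq t)⁻¹ : ℝ) : ℂ))
            = ((((Complex.normSq t)⁻¹ : ℝ)) : ℂ) * ((starRingEnd ℂ t) * F t) from by ring]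
        rw [Complex.re_ofReal_mul]
      rw [hdivre]
      have h1 : 0 ≤ ((starRingEnd ℂ t) * F t).re := by
        have h2 : 0 ≤ a * ‖t • u‖^2 := by positivity
        rw [hre'] at hna; linarith
      positivity
  -- apply harnack at the real point ‖y‖
  have hyball : ((‖y‖ : ℝ) : ℂ) ∈ ball (0:ℂ) 1 := by
    rw [mem_ball_zero_iff, Complex.norm_real, Real.norm_eq_abs, _root_.abs_of_nonneg hr0.le]
    exact hr1
  have hhar := harnack_aux hqd hqre hyball
  have hnorm_coe : ‖((‖y‖ : ℝ) : ℂ)‖ = ‖y‖ := by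
    rw [Complex.norm_real, Real.norm_eq_abs, _root_.abs_of_nonneg hr0.le]
  rw [hnorm_coe] at hhar
  -- compute q at the real point
  have hsmul : ((‖y‖ : ℝ) : ℂ) • u = y := by
    rw [hu, smul_smul, mul_inv_cancel₀ hrc, one_smul]
  have hqval : (q ((‖y‖ : ℝ) : ℂ)).re = (‖y‖^2)⁻¹ * (ψ (f y)).re := by
    rw [hq, dslope_of_ne F hrc, slope_def_field, hF0, sub_zero, sub_zero, hF]
    simp only [hsmul]
    rw [hφu, ContinuousLinearMap.smul_apply, smul_eq_mul]
    rw [show ((‖y‖:ℝ):ℂ)⁻¹ * ψ (f y) / ((‖y‖:ℝ):ℂ) = (((‖y‖^2)⁻¹ : ℝ) : ℂ) * ψ (f y) from by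
      rw [div_eq_mul_inv]; push_cast; ring]
    rw [Complex.re_ofReal_mul]
  rw [hqval] at hhar
  have hK' : (-K) * ((1 - ‖y‖) / (1 + ‖y‖)) ≤ (q 0).re * ((1 - ‖y‖) / (1 + ‖y‖)) := by
    apply mul_le_mul_of_nonneg_right hq0K
    apply div_nonneg <;> linarith
  have hfinal : (-K) * ((1 - ‖y‖) / (1 + ‖y‖)) ≤ (‖y‖^2)⁻¹ * (ψ (f y)).re :=
    le_trans hK' hhar
  have hy2 : 0 < ‖y‖^2 := by positivity
  calc (-K) * ((1 - ‖y‖) / (1 + ‖y‖)) * ‖y‖^2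
      ≤ ((‖y‖^2)⁻¹ * (ψ (f y)).re) * ‖y‖^2 := by
        exact mul_le_mul_of_nonneg_right hfinal hy2.le
    _ = (ψ (f y)).re := by field_simp


set_option maxHeartbeats 1000000 in
lemma real_arith (a K lam r s D : ℝ) (ha : 0 ≤ a) (hK : K < 0) (hlam : 0 < lam)
    (hr0 : 0 < r) (hr1 : r < 1) (hs0 : 0 < s) (hs1 : s < 1)
    (h1 : s * (1 + lam * a) ≤ r)
    (h2 : s * ((1+s) + (lam*(-K))*(1-s)) ≤ r * (1+s))
    (hlow : (r^2 - r*s)/lam ≤ D) :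
    max (a / (1 + lam * a)) ((-2 - lam * K) / (lam * (1 - lam * K))) * r^2 ≤ D := by
  have h1s : (0:ℝ) < 1 + s := by linarith
  have hsr : s ≤ r := by nlinarith [mul_nonneg (mul_nonneg hlam.le ha) hs0.le]
  have hden1 : (0:ℝ) < 1 + lam * a := by nlinarith
  have hden2 : (0:ℝ) < lam * (1 - lam * K) := by nlinarith [mul_pos hlam (neg_pos.2 hK)]
  have hB1 : a / (1 + lam * a) * r^2 ≤ (r^2 - r*s)/lam := by
    rw [div_mul_eq_mul_div, div_le_div_iff₀ hden1 hlam]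
    nlinarith [mul_le_mul_of_nonneg_left h1 hr0.le]
  have hB2 : (-2 - lam * K) / (lam * (1 - lam * K)) * r^2 ≤ (r^2 - r*s)/lam := by
    rw [div_mul_eq_mul_div, div_le_div_iff₀ hden2 hlam]
    by_cases hb : -2 - lam * K ≤ 0
    · nlinarith [mul_nonneg (mul_nonneg hr0.le (sub_nonneg.2 hsr)) hden2.le,
        mul_nonneg (by linarith : (0:ℝ) ≤ 2 + lam*K) (by positivity : (0:ℝ) ≤ r^2*lam)]
    · push_neg at hb
      have ht2 : 2 < lam * (-K) := by nlinarith
      have hkey1 : (lam*(-K) - 1) * s < 1 := by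
        nlinarith [h2, mul_lt_mul_of_pos_right hr1 h1s, hs0, hs1]
      have hkey2 : 0 ≤ 1 + s + (lam*(-K)) * (1 - 2*s) := by
        nlinarith [mul_lt_mul_of_pos_right hkey1 (by nlinarith : (0:ℝ) < 2*(lam*(-K)) - 1)]
      have hs3 : s * (1 + lam*(-K)) ≤ 3 * r := by
        nlinarith [h2, mul_nonneg hs0.le hkey2, h1s, hs0]
      nlinarith [mul_nonneg (mul_nonneg hlam.le hr0.le)
        (by nlinarith : (0:ℝ) ≤ 3*r - s*(1 + lam*(-K)))]
  rcases max_choice (a / (1 + lam * a)) ((-2 - lam * K) / (lam * (1 - lam * K))) with h | h <;>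
    rw [h]
  · exact le_trans hB1 hlow
  · exact le_trans hB2 hlow

set_option maxHeartbeats 1000000 in
/-- Corollary 4.4: `f ∘ G_λ ∈ N_{a_λ}` with
`a_λ = max( a/(1+λa), (-2-λK)/(λ(1-λK)) )`. -/
theorem stmt_10 {X : Type*} [NormedAddCommGroup X] [NormedSpace ℂ X] [Nontrivial X]
    (a : ℝ) (ha : 0 ≤ a) (f : X → X) (hf : IsNa a f)
    (K : ℝ) (hKdef : K = KA (fderiv ℂ f 0) Real.pi) (hK : K < 0) (hKa : K + a ≤ 0)
    (lam : ℝ) (hlam : 0 < lam)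
    (G : X → X) (hG : IsResolvent f lam G)
    (alam : ℝ)
    (halam : alam = max (a / (1 + lam * a)) ((-2 - lam * K) / (lam * (1 - lam * K)))) :
    f (G 0) = 0 ∧
    ∀ x ∈ ball (0 : X) 1, ∀ φ ∈ suppFun x, alam * ‖x‖ ^ 2 ≤ (φ (f (G x))).re := by
  obtain ⟨hfd, hf0, hfN⟩ := hf
  obtain ⟨hGd, hGp⟩ := hG
  have h0ball : (0:X) ∈ ball (0:X) 1 := mem_ball_self one_pos
  have hG0 : G 0 = 0 := ((hGp 0 h0ball).2.2 0 h0ball (by rw [hf0]; simp)).symm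
  refine ⟨by rw [hG0, hf0], ?_⟩
  intro x hx φ hφ
  by_cases hx0 : x = 0
  · simp [hx0, hG0, hf0]
  obtain ⟨hwball, hweq, -⟩ := hGp x hx
  set w := G x with hw
  have hr0 : 0 < ‖x‖ := norm_pos_iff.2 hx0
  have hr1 : ‖x‖ < 1 := mem_ball_zero_iff.1 hx
  have hs1 : ‖w‖ < 1 := mem_ball_zero_iff.1 hwball
  have hw0 : w ≠ 0 := by
    intro h
    apply hx0
    rw [← hweq, h, hf0]; simp
  have hs0 : 0 < ‖w‖ := norm_pos_iff.2 hw0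
  obtain ⟨g, hg1, hgw⟩ := exists_dual_vector ℂ w (norm_ne_zero_iff.2 hw0)
  set ψ : X →L[ℂ] ℂ := ((‖w‖ : ℝ) : ℂ) • g with hψdef
  have hψmem : ψ ∈ suppFun w := by
    constructor
    · rw [hψdef, ContinuousLinearMap.smul_apply, hgw, smul_eq_mul, sq]
      norm_num
    · rw [hψdef, norm_smul (((‖w‖:ℝ):ℂ)) g, hg1, mul_one, Complex.norm_real,
        Real.norm_eq_abs, _root_.abs_of_nonneg hs0.le]
  -- apply φ to the resolvent equation
  have hφx : φ x = ((‖x‖ : ℝ) : ℂ)^2 := hφ.1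
  have hφeq : (φ w).re + lam * (φ (f w)).re = ‖x‖^2 := by
    have h1 := congrArg φ hweq
    rw [map_add, map_smul] at h1
    have h2 := congrArg Complex.re h1
    rw [Complex.add_re, smul_eq_mul, Complex.re_ofReal_mul, hφx] at h2
    rw [h2, ← Complex.ofReal_pow, Complex.ofReal_re]
  have hψeq : ‖w‖^2 + lam * (ψ (f w)).re = (ψ x).re := by
    have h1 := congrArg ψ hweq
    rw [map_add, map_smul] at h1
    have h2 := congrArg Complex.re h1
    rw [Complex.add_re, smul_eq_mul, Complex.re_ofReal_mul, hψmem.1] at h2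
    rw [← h2, ← Complex.ofReal_pow, Complex.ofReal_re]
  have hψx : (ψ x).re ≤ ‖w‖ * ‖x‖ := by
    calc (ψ x).re ≤ ‖ψ x‖ := Complex.re_le_norm _
      _ = ‖ψ x‖ := by rfl
      _ ≤ ‖ψ‖ * ‖x‖ := ψ.le_opNorm x
      _ = ‖w‖ * ‖x‖ := by rw [hψmem.2]
  have hφw : (φ w).re ≤ ‖x‖ * ‖w‖ := by
    calc (φ w).re ≤ ‖φ w‖ := Complex.re_le_norm _
      _ = ‖φ w‖ := by rfl
      _ ≤ ‖φ‖ * ‖w‖ := φ.le_opNorm w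
      _ = ‖x‖ * ‖w‖ := by rw [hφ.2]
  have hNa : a * ‖w‖^2 ≤ (ψ (f w)).re := hfN w hwball ψ hψmem
  have hHK : (-K) * ((1 - ‖w‖) / (1 + ‖w‖)) * ‖w‖^2 ≤ (ψ (f w)).re :=
    Na_lower a ha f ⟨hfd, hf0, hfN⟩ K hKdef hK hwball hψmem
  set r := ‖x‖
  set s := ‖w‖
  have h1s : (0:ℝ) < 1 + s := by linarith
  have h1 : s * (1 + lam * a) ≤ r := by
    nlinarith [mul_le_mul_of_nonneg_left hNa hlam.le, hψeq, hψx, hs0]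
  have hHK3 : (-K) * (1-s) * s^2 ≤ (ψ (f w)).re * (1+s) := by
    have h := mul_le_mul_of_nonneg_right hHK h1s.le
    have hdiv : (1-s)/(1+s) * (1+s) = 1-s := div_mul_cancel₀ _ h1s.ne'
    have he : (-K) * ((1-s)/(1+s)) * s^2 * (1+s) = (-K)*(1-s)*s^2 := by
      linear_combination ((-K) * s^2) * hdiv
    linarith [h, he]
  have h2 : s * ((1+s) + (lam*(-K))*(1-s)) ≤ r * (1+s) := by
    have e4 : ((ψ x).re - s^2) * (1+s) ≤ (s*r - s^2) * (1+s) :=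
      mul_le_mul_of_nonneg_right (by linarith [hψx]) h1s.le
    have e5 : lam * ((-K) * (1-s) * s^2) ≤ (s*r - s^2) * (1+s) := by
      nlinarith [mul_le_mul_of_nonneg_left hHK3 hlam.le, hψeq]
    nlinarith [e5, hs0]
  have hlow : (r^2 - r*s)/lam ≤ (φ (f w)).re := by
    rw [div_le_iff₀ hlam]
    nlinarith [hφeq, hφw]
  rw [halam]
  exact real_arith a K lam r s _ ha hK hlam hr0 hr1 hs0 hs1 h1 h2 hlow
end
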